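/- (Robust Berge argmax Hölder bound) Under the hypotheses of the robust Berge theorem — f : A × B → ℝ continuous, μ-strongly concave in b for each a, L-Lipschitz on A × B, and g : A ⇉ B an L'-Hausdorff-Lipschitz, nonempty, convex, compact-valued correspondence — the argmax map g*(a) = argmax_{b∈g(a)} f(a,b) is single-valued and satisfies ‖g*(a₁) − g*(a₂)‖ ≤ (L' + 2·√(4/μ)·√(L + L·L'))·max{‖a₁−a₂‖^{1/2}, ‖a₁−a₂‖} for all a₁, a₂ ∈ A. -/

import Mathlib

/-- Robust Berge argmax Hölder bound: under the hypotheses of the robust Berge maximum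
theorem, maximizers of `f a` over `g a` satisfy
`‖g*(a₁) − g*(a₂)‖ ≤ (L' + 2√(4/μ)√(L + L·L'))·max{‖a₁−a₂‖^{1/2}, ‖a₁−a₂‖}`. -/
theorem robust_berge_argmax_holder (n m : ℕ)
    (A : Set (EuclideanSpace ℝ (Fin n))) (B : Set (EuclideanSpace ℝ (Fin m)))
    (f : EuclideanSpace ℝ (Fin n) → EuclideanSpace ℝ (Fin m) → ℝ)
    (g : EuclideanSpace ℝ (Fin n) → Set (EuclideanSpace ℝ (Fin m)))
    (μ L L' : ℝ) (hμ : 0 < μ) (hL : 0 ≤ L) (hL' : 0 ≤ L')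
    (hfc : Continuous fun p : EuclideanSpace ℝ (Fin n) × EuclideanSpace ℝ (Fin m) =>
      f p.1 p.2)
    (hconc : ∀ a ∈ A, ∀ x ∈ B, ∀ y ∈ B, ∀ l : ℝ, 0 ≤ l → l ≤ 1 →
      l * f a x + (1 - l) * f a y + μ / 2 * (l * (1 - l)) * ‖x - y‖ ^ 2
        ≤ f a (l • x + (1 - l) • y))
    (hf : ∀ a1 ∈ A, ∀ a2 ∈ A, ∀ b1 ∈ B, ∀ b2 ∈ B,
      |f a1 b1 - f a2 b2| ≤ L * (‖a1 - a2‖ + ‖b1 - b2‖))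
    (hg : ∀ a ∈ A, (g a).Nonempty ∧ Convex ℝ (g a) ∧ IsCompact (g a) ∧ g a ⊆ B)
    (hH : ∀ a1 ∈ A, ∀ a2 ∈ A, Metric.hausdorffDist (g a1) (g a2) ≤ L' * ‖a1 - a2‖) :
    ∀ a1 ∈ A, ∀ a2 ∈ A, ∀ b1 ∈ g a1, ∀ b2 ∈ g a2,
      (∀ b ∈ g a1, f a1 b ≤ f a1 b1) → (∀ b ∈ g a2, f a2 b ≤ f a2 b2) →
      ‖b1 - b2‖ ≤ (L' + 2 * Real.sqrt (4 / μ) * Real.sqrt (L + L * L')) *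
        max (Real.sqrt ‖a1 - a2‖) ‖a1 - a2‖ := by
  intro a1 ha1 a2 ha2 b1 hb1 b2 hb2 hmax1 hmax2
  obtain ⟨hne1, hconv1, hcomp1, hsub1⟩ := hg a1 ha1
  obtain ⟨hne2, hconv2, hcomp2, hsub2⟩ := hg a2 ha2
  set δ := ‖a1 - a2‖ with hδdef
  have hδ0 : 0 ≤ δ := norm_nonneg _
  have hed : EMetric.hausdorffEdist (g a1) (g a2) ≠ ⊤ :=
    Metric.hausdorffEdist_ne_top_of_nonempty_of_bounded hne1 hne2 hcomp1.isBounded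
      hcomp2.isBounded
  have hed' : EMetric.hausdorffEdist (g a2) (g a1) ≠ ⊤ := by
    have e : EMetric.hausdorffEdist (g a2) (g a1) = EMetric.hausdorffEdist (g a1) (g a2) :=
      EMetric.hausdorffEdist_comm
    rw [e]; exact hed
  -- find b2' ∈ g a1 close to b2
  obtain ⟨b2', hb2', hdist2⟩ := hcomp1.exists_infDist_eq_dist hne1 b2
  have hbd2 : ‖b2 - b2'‖ ≤ L' * δ := by
    rw [← dist_eq_norm, ← hdist2]
    calc Metric.infDist b2 (g a1)
        ≤ Metric.hausdorffDist (g a2) (g a1) :=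
          Metric.infDist_le_hausdorffDist_of_mem hb2 hed'
      _ = Metric.hausdorffDist (g a1) (g a2) := Metric.hausdorffDist_comm
      _ ≤ L' * δ := hH a1 ha1 a2 ha2
  -- find b1' ∈ g a2 close to b1
  obtain ⟨b1', hb1', hdist1⟩ := hcomp2.exists_infDist_eq_dist hne2 b1
  have hbd1 : ‖b1 - b1'‖ ≤ L' * δ := by
    rw [← dist_eq_norm, ← hdist1]
    calc Metric.infDist b1 (g a2)
        ≤ Metric.hausdorffDist (g a1) (g a2) :=
          Metric.infDist_le_hausdorffDist_of_mem hb1 hed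
      _ ≤ L' * δ := hH a1 ha1 a2 ha2
  -- memberships in B
  have hb1B : b1 ∈ B := hsub1 hb1
  have hb2B : b2 ∈ B := hsub2 hb2
  have hb1'B : b1' ∈ B := hsub2 hb1'
  have hb2'B : b2' ∈ B := hsub1 hb2'
  -- value comparisons
  have h1 : f a1 b1 - f a1 b1' ≤ L * L' * δ := by
    have := hf a1 ha1 a1 ha1 b1 hb1B b1' hb1'B
    rw [sub_self, norm_zero] at this
    have h := (abs_le.mp this).2
    nlinarith [hbd1]
  have h2 : f a1 b1' - f a2 b1' ≤ L * δ := by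
    have := hf a1 ha1 a2 ha2 b1' hb1'B b1' hb1'B
    rw [sub_self, norm_zero] at this
    have h := (abs_le.mp this).2
    linarith
  have h3 : f a2 b1' ≤ f a2 b2 := hmax2 b1' hb1'
  have h4 : f a1 b2 - f a1 b2' ≤ L * L' * δ := by
    have := hf a1 ha1 a1 ha1 b2 hb2B b2' hb2'B
    rw [sub_self, norm_zero] at this
    have h := (abs_le.mp this).2
    nlinarith [hbd2]
  have h5 : f a2 b2 - f a1 b2 ≤ L * δ := by
    have := hf a1 ha1 a2 ha2 b2 hb2B b2 hb2B
    rw [sub_self, norm_zero] at this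
    have h := (abs_le.mp this).1
    linarith
  have hgap : f a1 b1 - f a1 b2' ≤ 2 * (L + L * L') * δ := by linarith
  -- strong concavity at a1 with midpoint of b1, b2'
  have hmid : (1/2 : ℝ) • b1 + (1 - 1/2 : ℝ) • b2' ∈ g a1 := by
    have := hconv1 hb1 hb2' (by norm_num : (0:ℝ) ≤ 1/2) (by norm_num : (0:ℝ) ≤ 1 - 1/2)
      (by norm_num)
    simpa using this
  have hsc := hconc a1 ha1 b1 hb1B b2' hb2'B (1/2) (by norm_num) (by norm_num)
  have hmidle : f a1 ((1/2 : ℝ) • b1 + (1 - 1/2 : ℝ) • b2') ≤ f a1 b1 := hmax1 _ hmid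
  have hsq : ‖b1 - b2'‖ ^ 2 ≤ 8 / μ * ((L + L * L') * δ) := by
    have key : μ / 2 * (1/2 * (1 - 1/2)) * ‖b1 - b2'‖ ^ 2
        ≤ (f a1 b1 - f a1 b2') / 2 := by linarith
    rw [div_mul_eq_mul_div, le_div_iff₀ hμ]
    nlinarith [key, hgap]
  -- the key norm bound
  set C := 2 * Real.sqrt (4 / μ) * Real.sqrt (L + L * L') with hC
  have hC0 : 0 ≤ C := by positivity
  have hLL' : 0 ≤ L + L * L' := by positivity
  have hs : ‖b1 - b2'‖ ≤ C * Real.sqrt δ := by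
    have hrhs0 : 0 ≤ C * Real.sqrt δ := by positivity
    have hsq2 : (C * Real.sqrt δ) ^ 2 = 4 * (4 / μ) * ((L + L * L') * δ) := by
      have e1 : Real.sqrt (4 / μ) ^ 2 = 4 / μ := Real.sq_sqrt (by positivity)
      have e2 : Real.sqrt (L + L * L') ^ 2 = L + L * L' := Real.sq_sqrt hLL'
      have e3 : Real.sqrt δ ^ 2 = δ := Real.sq_sqrt hδ0
      have e4 : (C * Real.sqrt δ) ^ 2
          = 4 * Real.sqrt (4 / μ) ^ 2 * (Real.sqrt (L + L * L') ^ 2 * Real.sqrt δ ^ 2) := by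
        rw [hC]; ring
      rw [e4, e1, e2, e3]
    have h8 : 8 / μ * ((L + L * L') * δ) ≤ 4 * (4 / μ) * ((L + L * L') * δ) := by
      have hx : 0 ≤ (L + L * L') * δ := by positivity
      have h16 : 8 / μ ≤ 4 * (4 / μ) := by
        have hpos : 0 ≤ 8 / μ := by positivity
        have heq : 4 * (4 / μ) - 8 / μ = 8 / μ := by ring
        linarith
      exact mul_le_mul_of_nonneg_right h16 hx
    have : ‖b1 - b2'‖ ^ 2 ≤ (C * Real.sqrt δ) ^ 2 := by
      rw [hsq2]; linarith
    calc ‖b1 - b2'‖ = Real.sqrt (‖b1 - b2'‖ ^ 2) := (Real.sqrt_sq (norm_nonneg _)).symm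
      _ ≤ Real.sqrt ((C * Real.sqrt δ) ^ 2) := Real.sqrt_le_sqrt this
      _ = C * Real.sqrt δ := Real.sqrt_sq hrhs0
  -- triangle inequality and finish
  have htri : ‖b1 - b2‖ ≤ ‖b1 - b2'‖ + ‖b2 - b2'‖ := by
    have : b1 - b2 = (b1 - b2') - (b2 - b2') := by abel
    rw [this]; exact norm_sub_le _ _
  have hM1 : Real.sqrt δ ≤ max (Real.sqrt δ) δ := le_max_left _ _
  have hM2 : δ ≤ max (Real.sqrt δ) δ := le_max_right _ _
  calc ‖b1 - b2‖ ≤ C * Real.sqrt δ + L' * δ := by linarith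
    _ ≤ C * max (Real.sqrt δ) δ + L' * max (Real.sqrt δ) δ := by
        gcongr
    _ = (L' + C) * max (Real.sqrt δ) δ := by ring
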